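/- Let 0 < R ≤ ∞ and let φ be a quasiconcave function on [0,R). Then there exists a constant C > 0 such that sup_{0<t<R} φ(t) · (S_φ f)**(t) ≤ C · sup_{0<t<R} φ(t) f**(t) for every nonnegative nonincreasing measurable function f on (0,R) if and only if φ satisfies the B-condition. (This is the statement that S_φ : M_φ → M_φ is bounded if and only if φ ∈ B.) -/

import Mathlib

open MeasureTheory Set ENNReal Filter

noncomputable section

/-- The open interval `(0, R)` inside `ℝ`, where `R ∈ (0, ∞]` is an extended real. -/
def DomIoo (R : ℝ≥0∞) : Set ℝ := {t : ℝ | 0 < t ∧ ENNReal.ofReal t < R}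

/-- The part of `(0, R)` lying strictly above `t`. -/
def DomAbove (R : ℝ≥0∞) (t : ℝ) : Set ℝ := {s : ℝ | t < s ∧ ENNReal.ofReal s < R}

/-- `φ : [0, R) → [0, ∞)` is quasiconcave: it vanishes exactly at `0`, is nondecreasing,
and `t ↦ φ(t)/t` is nonincreasing on `(0, R)`.  (Values on `(0, R)` are finite.) -/
def QuasiConcaveOn (R : ℝ≥0∞) (φ : ℝ → ℝ≥0∞) : Prop :=
  φ 0 = 0 ∧
  (∀ t ∈ DomIoo R, 0 < φ t ∧ φ t < ⊤) ∧
  (∀ s t : ℝ, 0 ≤ s → s ≤ t → t ∈ DomIoo R → φ s ≤ φ t) ∧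
  (∀ s t : ℝ, s ∈ DomIoo R → s ≤ t → t ∈ DomIoo R →
    φ t / ENNReal.ofReal t ≤ φ s / ENNReal.ofReal s)

/-- `f` is a nonnegative nonincreasing measurable function on `(0, R)`
(nonnegativity is built into the codomain `[0, ∞]`). -/
def NonincOn (R : ℝ≥0∞) (f : ℝ → ℝ≥0∞) : Prop :=
  Measurable f ∧ ∀ s t : ℝ, s ∈ DomIoo R → s ≤ t → t ∈ DomIoo R → f t ≤ f s

/-- The level function `f**(t) = (1/t) ∫₀ᵗ f(s) ds`. -/
def dstar (f : ℝ → ℝ≥0∞) (t : ℝ) : ℝ≥0∞ :=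
  (∫⁻ s in Ioo (0 : ℝ) t, f s) / ENNReal.ofReal t

/-- The supremum operator `S_φ f(t) = (1/φ(t)) ⋅ sup_{0<s<t} φ(s) f(s)`. -/
def Ssup (φ f : ℝ → ℝ≥0∞) (t : ℝ) : ℝ≥0∞ :=
  (⨆ s ∈ Ioo (0 : ℝ) t, φ s * f s) / φ t

/-- The supremum operator `T_ψ f(t) = (1/ψ(t)) ⋅ sup_{t<s<R} ψ(s) f(s)`. -/
def Tsup (R : ℝ≥0∞) (ψ f : ℝ → ℝ≥0∞) (t : ℝ) : ℝ≥0∞ :=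
  (⨆ s ∈ DomAbove R t, ψ s * f s) / ψ t

/-- The `B`-condition: `∫₀ᵗ ds/φ(s) ≤ C ⋅ t/φ(t)` on `(0, R)` for some constant `C > 0`. -/
def BCond (R : ℝ≥0∞) (φ : ℝ → ℝ≥0∞) : Prop :=
  ∃ C : ℝ, 0 < C ∧ ∀ t ∈ DomIoo R,
    (∫⁻ s in Ioo (0 : ℝ) t, 1 / φ s) ≤ ENNReal.ofReal C * (ENNReal.ofReal t / φ t)

/-- A weight on `(0, R)`: positive, measurable and locally integrable
(with finite integral near the origin). -/
def IsWeight (R : ℝ≥0∞) (w : ℝ → ℝ≥0∞) : Prop :=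
  Measurable w ∧ (∀ t ∈ DomIoo R, 0 < w t ∧ w t < ⊤) ∧
  ∀ t ∈ DomIoo R, (∫⁻ s in Ioo (0 : ℝ) t, w s) < ⊤

/-- Nontriviality of a weight `w` for the exponent `p`:
`∫₁^∞ s^{-p} w(s) ds < ∞` when `R = ∞`, and `∫₀ᴿ s^{-p} w(s) ds = ∞` when `R < ∞`. -/
def Nontriv (R : ℝ≥0∞) (p : ℝ) (w : ℝ → ℝ≥0∞) : Prop :=
  (R = ⊤ → (∫⁻ s in Ioi (1 : ℝ), ENNReal.ofReal s ^ (-p) * w s) < ⊤) ∧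
  (R ≠ ⊤ → (∫⁻ s in DomIoo R, ENNReal.ofReal s ^ (-p) * w s) = ⊤)

/-- Cancellation: from `a (b I / T) ≤ C' b` deduce `I ≤ C' (T / a)`. -/
lemma cancel_aux {a b T C' I : ℝ≥0∞} (ha : a ≠ 0) (ha' : a ≠ ⊤) (hb : b ≠ 0) (hb' : b ≠ ⊤)
    (hT : T ≠ 0) (hT' : T ≠ ⊤) (h : a * (b * I / T) ≤ C' * b) : I ≤ C' * (T / a) := by
  have h1 : a * b * I / T ≤ C' * b := by
    rw [mul_assoc, mul_div_assoc]; exact h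
  have h2 : a * b * I ≤ C' * b * T := (ENNReal.div_le_iff hT hT').1 h1
  have h3 : C' * b * T = a * b * (C' * (T / a)) := by
    have hau : a * (T / a) = T := ENNReal.mul_div_cancel ha ha'
    calc C' * b * T = C' * b * (a * (T / a)) := by rw [hau]
      _ = a * b * (C' * (T / a)) := by ring
  rw [h3] at h2
  exact (ENNReal.mul_le_mul_iff_right (mul_ne_zero ha hb) (ENNReal.mul_ne_top ha' hb')).1 h2

/-- Cancellation: from `X ≤ K (T / a)` deduce `a (X / T) ≤ K`. -/
lemma cancel_aux2 {a T K X : ℝ≥0∞} (ha : a ≠ 0) (ha' : a ≠ ⊤) (hT : T ≠ 0) (hT' : T ≠ ⊤)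
    (h : X ≤ K * (T / a)) : a * (X / T) ≤ K := by
  have h1 : a * (X / T) ≤ a * (K * (T / a) / T) :=
    mul_le_mul_right (ENNReal.div_le_div_right h T) a
  refine h1.trans_eq ?_
  have e1 : K * (T / a) / T = K / a := by
    rw [div_eq_mul_inv T a, div_eq_mul_inv, div_eq_mul_inv, mul_assoc, mul_assoc]
    congr 1
    rw [mul_comm a⁻¹ T⁻¹, ← mul_assoc, ENNReal.mul_inv_cancel hT hT', one_mul]
  rw [e1, ENNReal.mul_div_cancel ha ha']

/-- Monotone-convergence style bound: if `g` is antitone on `(0, t)` and all integrals over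
`(x, t)` with `0 < x < t` are bounded by `M`, then so is the integral over `(0, t)`. -/
lemma lintegral_Ioo_zero_le {t : ℝ} (ht : 0 < t) {g : ℝ → ℝ≥0∞}
    (hg : AntitoneOn g (Ioo 0 t)) {M : ℝ≥0∞}
    (h : ∀ x : ℝ, 0 < x → x < t → (∫⁻ s in Ioo x t, g s) ≤ M) :
    (∫⁻ s in Ioo (0:ℝ) t, g s) ≤ M := by
  obtain ⟨g', hg'm, hgg'⟩ :=
    (aemeasurable_restrict_of_antitoneOn (μ := volume) measurableSet_Ioo hg :
      AEMeasurable g (volume.restrict (Ioo 0 t)))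
  set x : ℕ → ℝ := fun n => t / (n + 2) with hxdef
  have hx0 : ∀ n, 0 < x n := fun n => div_pos ht (by positivity)
  have hxt : ∀ n, x n < t := fun n =>
    div_lt_self ht (by have h : (0:ℝ) ≤ n := Nat.cast_nonneg n; linarith)
  have hxsub : ∀ n, Ioo (x n) t ⊆ Ioo (0:ℝ) t := fun n s hs => ⟨(hx0 n).trans hs.1, hs.2⟩
  have hxanti : ∀ n m : ℕ, n ≤ m → x m ≤ x n := by
    intro n m hnm
    apply div_le_div_of_nonneg_left ht.le (by positivity)
    have : (n:ℝ) ≤ m := Nat.cast_le.2 hnm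
    linarith
  set G : ℕ → ℝ → ℝ≥0∞ := fun n => (Ioo (x n) t).indicator g' with hGdef
  have hGmeas : ∀ n, Measurable (G n) := fun n => hg'm.indicator measurableSet_Ioo
  have hGmono : Monotone G := by
    intro n m hnm s
    exact Set.indicator_le_indicator_of_subset
      (Ioo_subset_Ioo (hxanti n m hnm) le_rfl) (fun _ => zero_le) s
  have hGsup : ∀ s, (⨆ n, G n s) = (Ioo (0:ℝ) t).indicator g' s := by
    intro s
    by_cases hs : s ∈ Ioo (0:ℝ) t
    · rw [Set.indicator_of_mem hs]
      apply le_antisymm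
      · refine iSup_le fun n => ?_
        by_cases hsn : s ∈ Ioo (x n) t
        · exact le_of_eq (Set.indicator_of_mem hsn _)
        · exact le_of_eq_of_le (Set.indicator_of_notMem hsn _) (zero_le)
      · obtain ⟨n, hn⟩ := exists_nat_gt (t / s)
        have hxn : x n < s := by
          rw [hxdef]
          simp only
          rw [div_lt_iff₀ (by positivity)]
          rw [div_lt_iff₀ hs.1] at hn
          nlinarith [hs.1, hs.2]
        have hsn : s ∈ Ioo (x n) t := ⟨hxn, hs.2⟩
        calc g' s = G n s := (Set.indicator_of_mem hsn _).symm
          _ ≤ ⨆ n, G n s := le_iSup (fun n => G n s) n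
    · rw [Set.indicator_of_notMem hs]
      refine le_antisymm (iSup_le fun n => ?_) (zero_le)
      exact le_of_eq (Set.indicator_of_notMem (fun hsn => hs (hxsub n hsn)) _)
  have key : (∫⁻ s in Ioo (0:ℝ) t, g' s) = ⨆ n, ∫⁻ s in Ioo (x n) t, g' s := by
    rw [← lintegral_indicator measurableSet_Ioo]
    have hn : ∀ n, (∫⁻ s in Ioo (x n) t, g' s) = ∫⁻ s, G n s := fun n =>
      (lintegral_indicator measurableSet_Ioo g').symm
    simp_rw [hn]
    rw [← lintegral_iSup hGmeas hGmono]
    exact lintegral_congr fun s => (hGsup s).symm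
  calc (∫⁻ s in Ioo (0:ℝ) t, g s) = ∫⁻ s in Ioo (0:ℝ) t, g' s := lintegral_congr_ae hgg'
    _ = ⨆ n, ∫⁻ s in Ioo (x n) t, g' s := key
    _ ≤ M := by
        refine iSup_le fun n => ?_
        have he : (∫⁻ s in Ioo (x n) t, g' s) = ∫⁻ s in Ioo (x n) t, g s :=
          lintegral_congr_ae
            (Filter.EventuallyEq.symm (ae_restrict_of_ae_restrict_of_subset (hxsub n) hgg'))
        rw [he]; exact h _ (hx0 n) (hxt n)

/-- `S_φ : M_φ → M_φ` is bounded if and only if `φ ∈ B`. -/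
theorem statement5 (R : ℝ≥0∞) (hR : 0 < R) (φ : ℝ → ℝ≥0∞)
    (hφ : QuasiConcaveOn R φ) :
    (∃ C : ℝ, 0 < C ∧ ∀ f : ℝ → ℝ≥0∞, NonincOn R f →
        (⨆ t ∈ DomIoo R, φ t * dstar (Ssup φ f) t) ≤
          ENNReal.ofReal C * ⨆ t ∈ DomIoo R, φ t * dstar f t) ↔
      BCond R φ := by
  obtain ⟨hφ0, hφfin, hφmono, hφqc⟩ := hφ
  constructor
  · -- boundedness implies the B-condition
    rintro ⟨C, hC, hbd⟩
    refine ⟨C, hC, ?_⟩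
    intro t ht
    have htpos : 0 < t := ht.1
    have hsubt : Ioo (0:ℝ) t ⊆ DomIoo R := fun s hs =>
      ⟨hs.1, lt_of_le_of_lt (ENNReal.ofReal_le_ofReal hs.2.le) ht.2⟩
    have hanti : AntitoneOn (fun s => 1 / φ s) (Ioo (0:ℝ) t) := by
      intro u hu v hv huv
      exact ENNReal.div_le_div_left (hφmono u v hu.1.le huv (hsubt hv)) 1
    refine lintegral_Ioo_zero_le htpos hanti ?_
    intro x hx0 hxt
    have hxD : x ∈ DomIoo R := hsubt ⟨hx0, hxt⟩
    have hφx0 : φ x ≠ 0 := (hφfin x hxD).1.ne'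
    have hφxt : φ x ≠ ⊤ := (hφfin x hxD).2.ne
    have hφt0 : φ t ≠ 0 := (hφfin t ht).1.ne'
    have hφtt : φ t ≠ ⊤ := (hφfin t ht).2.ne
    have hT0 : ENNReal.ofReal t ≠ 0 := (ENNReal.ofReal_pos.2 htpos).ne'
    have hTt : ENNReal.ofReal t ≠ ⊤ := ENNReal.ofReal_ne_top
    have hX0 : ENNReal.ofReal x ≠ 0 := (ENNReal.ofReal_pos.2 hx0).ne'
    have hXt : ENNReal.ofReal x ≠ ⊤ := ENNReal.ofReal_ne_top
    set f : ℝ → ℝ≥0∞ := (Ioc (0:ℝ) x).indicator (fun _ => 1) with hfdef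
    have hfnon : NonincOn R f := by
      constructor
      · exact measurable_const.indicator measurableSet_Ioc
      · intro s u hs hsu hu
        by_cases hux : u ∈ Ioc (0:ℝ) x
        · have hsx : s ∈ Ioc (0:ℝ) x := ⟨hs.1, hsu.trans hux.2⟩
          rw [hfdef, Set.indicator_of_mem hux, Set.indicator_of_mem hsx]
        · rw [hfdef, Set.indicator_of_notMem hux]
          exact zero_le
    -- upper bound for the norm of the test function
    have hRHS : (⨆ τ ∈ DomIoo R, φ τ * dstar f τ) ≤ φ x := by
      refine iSup₂_le fun τ hτ => ?_
      have hτpos : 0 < τ := hτ.1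
      have hτ0 : ENNReal.ofReal τ ≠ 0 := (ENNReal.ofReal_pos.2 hτpos).ne'
      have hτt : ENNReal.ofReal τ ≠ ⊤ := ENNReal.ofReal_ne_top
      have hint : (∫⁻ s in Ioo (0:ℝ) τ, f s) = volume (Ioc (0:ℝ) x ∩ Ioo (0:ℝ) τ) := by
        rw [hfdef, lintegral_indicator_const measurableSet_Ioc, one_mul,
          Measure.restrict_apply measurableSet_Ioc]
      by_cases hτx : τ ≤ x
      · have hinter : Ioc (0:ℝ) x ∩ Ioo (0:ℝ) τ = Ioo (0:ℝ) τ :=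
          Set.inter_eq_right.mpr (fun s hs => ⟨hs.1, hs.2.le.trans hτx⟩)
        have : dstar f τ = 1 := by
          rw [dstar, hint, hinter, Real.volume_Ioo, sub_zero,
            ENNReal.div_self hτ0 hτt]
        rw [this, mul_one]
        exact hφmono τ x hτpos.le hτx hxD
      · push_neg at hτx
        have hinter : Ioc (0:ℝ) x ∩ Ioo (0:ℝ) τ = Ioc (0:ℝ) x :=
          Set.inter_eq_left.mpr (fun s hs => ⟨hs.1, hs.2.trans_lt hτx⟩)
        have hd : dstar f τ = ENNReal.ofReal x / ENNReal.ofReal τ := by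
          rw [dstar, hint, hinter, Real.volume_Ioc, sub_zero]
        rw [hd]
        have hq := hφqc x τ hxD hτx.le hτ
        calc φ τ * (ENNReal.ofReal x / ENNReal.ofReal τ)
            = (φ τ / ENNReal.ofReal τ) * ENNReal.ofReal x := by
              rw [div_eq_mul_inv, div_eq_mul_inv]; ring
          _ ≤ (φ x / ENNReal.ofReal x) * ENNReal.ofReal x := mul_le_mul_left hq _
          _ = φ x := ENNReal.div_mul_cancel hX0 hXt
    -- lower bound for the norm of `S_φ f`
    set I := ∫⁻ s in Ioo x t, (1 / φ s) with hIdef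
    have hLHS : φ t * (φ x * I / ENNReal.ofReal t) ≤
        ⨆ τ ∈ DomIoo R, φ τ * dstar (Ssup φ f) τ := by
      have hpt : ∀ s ∈ Ioo (0:ℝ) t,
          (Ioo x t).indicator (fun s => φ x * (1 / φ s)) s ≤ Ssup φ f s := by
        intro s _
        by_cases hs : s ∈ Ioo x t
        · rw [Set.indicator_of_mem hs]
          have hxs : x ∈ Ioo (0:ℝ) s := ⟨hx0, hs.1⟩
          have h1 : φ x ≤ ⨆ u ∈ Ioo (0:ℝ) s, φ u * f u := by
            have h2 : φ x * f x ≤ ⨆ u ∈ Ioo (0:ℝ) s, φ u * f u :=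
              le_biSup (fun u => φ u * f u) hxs
            have hxmem : x ∈ Ioc (0:ℝ) x := ⟨hx0, le_rfl⟩
            rwa [hfdef, Set.indicator_of_mem hxmem, mul_one] at h2
          calc φ x * (1 / φ s) = φ x / φ s := by rw [one_div, ← div_eq_mul_inv]
            _ ≤ (⨆ u ∈ Ioo (0:ℝ) s, φ u * f u) / φ s := ENNReal.div_le_div_right h1 _
            _ = Ssup φ f s := rfl
        · rw [Set.indicator_of_notMem hs]
          exact zero_le
      have hint1 : (∫⁻ s in Ioo (0:ℝ) t, (Ioo x t).indicator (fun s => φ x * (1 / φ s)) s)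
          = φ x * I := by
        have hss : Ioo x t ⊆ Ioo (0:ℝ) t := fun s hs => ⟨hx0.trans hs.1, hs.2⟩
        rw [lintegral_indicator measurableSet_Ioo, Measure.restrict_restrict measurableSet_Ioo,
          Set.inter_eq_left.mpr hss, hIdef]
        exact lintegral_const_mul' _ _ hφxt
      have hge : φ x * I ≤ ∫⁻ s in Ioo (0:ℝ) t, Ssup φ f s := by
        rw [← hint1]
        exact setLIntegral_mono' measurableSet_Ioo hpt
      have hstep : φ t * (φ x * I / ENNReal.ofReal t) ≤ φ t * dstar (Ssup φ f) t :=
        mul_le_mul_right (ENNReal.div_le_div_right hge _) _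
      exact hstep.trans (le_biSup (fun τ => φ τ * dstar (Ssup φ f) τ) ht)
    have hcomb : φ t * (φ x * I / ENNReal.ofReal t) ≤ ENNReal.ofReal C * φ x :=
      (hLHS.trans (hbd f hfnon)).trans (mul_le_mul_right hRHS _)
    exact cancel_aux hφt0 hφtt hφx0 hφxt hT0 hTt hcomb
  · -- the B-condition implies boundedness
    rintro ⟨C, hC, hB⟩
    refine ⟨C, hC, ?_⟩
    intro f hf
    set M := ⨆ τ ∈ DomIoo R, φ τ * dstar f τ with hMdef
    by_cases hM : M = ⊤
    · rw [hM, ENNReal.mul_top (ENNReal.ofReal_pos.2 hC).ne']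
      exact le_top
    refine iSup₂_le fun t ht => ?_
    have htpos : 0 < t := ht.1
    have hsubt : Ioo (0:ℝ) t ⊆ DomIoo R := fun s hs =>
      ⟨hs.1, lt_of_le_of_lt (ENNReal.ofReal_le_ofReal hs.2.le) ht.2⟩
    have claim1 : ∀ s ∈ DomIoo R, φ s * f s ≤ M := by
      intro s hs
      have hs0 : ENNReal.ofReal s ≠ 0 := (ENNReal.ofReal_pos.2 hs.1).ne'
      have hsub : Ioo (0:ℝ) s ⊆ DomIoo R := fun u hu =>
        ⟨hu.1, lt_of_le_of_lt (ENNReal.ofReal_le_ofReal hu.2.le) hs.2⟩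
      have h1 : f s * ENNReal.ofReal s ≤ ∫⁻ u in Ioo (0:ℝ) s, f u := by
        have h2 := setLIntegral_mono (μ := volume) (s := Ioo (0:ℝ) s) hf.1
          (fun u hu => hf.2 u s (hsub hu) hu.2.le hs)
        rwa [setLIntegral_const, Real.volume_Ioo, sub_zero] at h2
      have h2 : f s ≤ dstar f s := by
        have h3 := ENNReal.div_le_div_right h1 (ENNReal.ofReal s)
        rwa [mul_div_assoc, ENNReal.div_self hs0 ENNReal.ofReal_ne_top, mul_one] at h3
      calc φ s * f s ≤ φ s * dstar f s := mul_le_mul_right h2 _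
        _ ≤ M := le_biSup (fun τ => φ τ * dstar f τ) hs
    have claim2 : ∀ s ∈ Ioo (0:ℝ) t, Ssup φ f s ≤ M * (1 / φ s) := by
      intro s hs
      have hnum : (⨆ u ∈ Ioo (0:ℝ) s, φ u * f u) ≤ M :=
        iSup₂_le fun u hu => claim1 u (hsubt ⟨hu.1, hu.2.trans hs.2⟩)
      calc Ssup φ f s ≤ M / φ s := ENNReal.div_le_div_right hnum _
        _ = M * (1 / φ s) := by rw [one_div, div_eq_mul_inv]
    have hint : (∫⁻ s in Ioo (0:ℝ) t, Ssup φ f s) ≤ M * ∫⁻ s in Ioo (0:ℝ) t, 1 / φ s := by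
      calc (∫⁻ s in Ioo (0:ℝ) t, Ssup φ f s)
          ≤ ∫⁻ s in Ioo (0:ℝ) t, M * (1 / φ s) := setLIntegral_mono' measurableSet_Ioo claim2
        _ = M * ∫⁻ s in Ioo (0:ℝ) t, 1 / φ s := lintegral_const_mul' _ _ hM
    have hfinal : (∫⁻ s in Ioo (0:ℝ) t, Ssup φ f s)
        ≤ (ENNReal.ofReal C * M) * (ENNReal.ofReal t / φ t) := by
      refine hint.trans ?_
      calc M * ∫⁻ s in Ioo (0:ℝ) t, 1 / φ s
          ≤ M * (ENNReal.ofReal C * (ENNReal.ofReal t / φ t)) := mul_le_mul_right (hB t ht) _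
        _ = (ENNReal.ofReal C * M) * (ENNReal.ofReal t / φ t) := by ring
    have hres := cancel_aux2 (a := φ t) (T := ENNReal.ofReal t)
      (hφfin t ht).1.ne' (hφfin t ht).2.ne (ENNReal.ofReal_pos.2 htpos).ne'
      ENNReal.ofReal_ne_top hfinal
    simpa only [dstar] using hres
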